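/- If the token z_i is a leader, then it converges in finite time to a vertex of K: there exists k ∈ ℕ such that z_i^ℓ = z_i^k for all ℓ ≥ k and z_i^k is an extreme point of K. -/

import Mathlib

open scoped RealInnerProductSpace BigOperators Classical
open Filter Metric

noncomputable section

/-- The hardmax attention (argmax) index set `C_i` for a token configuration `z`
(attention matrix `A = I`): the set of indices `j` maximizing `⟪z_i, z_j⟫`. -/
def attn {d n : ℕ} (z : Fin n → EuclideanSpace ℝ (Fin d)) (i : Fin n) : Finset (Fin n) :=
  Finset.univ.filter fun j => (⟪z i, z j⟫ = ⨆ ℓ, ⟪z i, z ℓ⟫)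

/-- The pure-attention hardmax transformer dynamics with step-size `α > 0` and `A = I`:
`z_i^{k+1} = z_i^k + (α/(1+α))·(1/|C_i^k|)·Σ_{j ∈ C_i^k} (z_j^k − z_i^k)`. -/
def IsDyn {d n : ℕ} (α : ℝ) (z : ℕ → Fin n → EuclideanSpace ℝ (Fin d)) : Prop :=
  ∀ k i, z (k + 1) i = z k i +
    (α / (1 + α)) • (((attn (z k) i).card : ℝ)⁻¹ • ∑ j ∈ attn (z k) i, (z k j - z k i))

/-- The limiting set `K = ⋂ₖ co(Z^k)`, the intersection of the convex hulls of the token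
configurations over all times. -/
def limitK {d n : ℕ} (z : ℕ → Fin n → EuclideanSpace ℝ (Fin d)) :
    Set (EuclideanSpace ℝ (Fin d)) :=
  ⋂ k, convexHull ℝ (Set.range (z k))

lemma inner_le_of_mem_convexHull {d : ℕ} (x : EuclideanSpace ℝ (Fin d))
    {s : Set (EuclideanSpace ℝ (Fin d))} {r : ℝ} (h : ∀ y ∈ s, ⟪x, y⟫ ≤ r) :
    ∀ y ∈ convexHull ℝ s, ⟪x, y⟫ ≤ r := by
  have hc : Convex ℝ {w : EuclideanSpace ℝ (Fin d) | ⟪x, w⟫ ≤ r} :=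
    convex_halfSpace_le ((innerSL ℝ x).toLinearMap.isLinear) r
  exact fun y hy => convexHull_min h hc hy

lemma step_decomp {d n : ℕ} {α : ℝ} (hα : 0 < α)
    (z : ℕ → Fin n → EuclideanSpace ℝ (Fin d)) (hdyn : IsDyn α z) (k : ℕ) (j : Fin n) :
    ∃ m ∈ convexHull ℝ (Set.range (z k)),
      z (k + 1) j = (1 - α / (1 + α)) • z k j + (α / (1 + α)) • m := by
  have : Nonempty (Fin n) := ⟨j⟩
  set s := attn (z k) j with hs
  have hsne : s.Nonempty := by
    obtain ⟨ℓ, hℓ⟩ := exists_eq_ciSup_of_finite (f := fun ℓ => ⟪z k j, z k ℓ⟫)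
    exact ⟨ℓ, Finset.mem_filter.2 ⟨Finset.mem_univ _, hℓ⟩⟩
  have hcard : (0:ℝ) < (s.card : ℝ) := by exact_mod_cast Finset.card_pos.2 hsne
  refine ⟨(s.card : ℝ)⁻¹ • ∑ l ∈ s, z k l, ?_, ?_⟩
  · have := s.centerMass_mem_convexHull (w := fun _ => (1:ℝ)) (z := z k)
      (fun _ _ => zero_le_one) (by simpa using hcard) (fun l _ => Set.mem_range_self l)
    simpa [Finset.centerMass, Finset.sum_const, ← Nat.cast_smul_eq_nsmul ℝ] using this
  · rw [hdyn k j, ← hs]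
    have h1 : ∑ l ∈ s, (z k l - z k j) = (∑ l ∈ s, z k l) - (s.card : ℝ) • z k j := by
      rw [Finset.sum_sub_distrib, Finset.sum_const]
      simp [← Nat.cast_smul_eq_nsmul ℝ]
    rw [h1, smul_sub, smul_smul, inv_mul_cancel₀ (ne_of_gt hcard)]
    module

lemma step_mem_hull {d n : ℕ} {α : ℝ} (hα : 0 < α)
    (z : ℕ → Fin n → EuclideanSpace ℝ (Fin d)) (hdyn : IsDyn α z) (k : ℕ) (j : Fin n) :
    z (k + 1) j ∈ convexHull ℝ (Set.range (z k)) := by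
  obtain ⟨m, hm, hdec⟩ := step_decomp hα z hdyn k j
  rw [hdec]
  have h1α : (0:ℝ) < 1 + α := by linarith
  have hc0 : 0 ≤ α / (1 + α) := by positivity
  have hc1 : 0 ≤ 1 - α / (1 + α) := by
    rw [sub_nonneg, div_le_one h1α]; linarith
  exact (convex_convexHull ℝ _) (subset_convexHull ℝ _ (Set.mem_range_self j)) hm hc1 hc0
    (by ring)

lemma persist {d n : ℕ} {α : ℝ} (hα : 0 < α)
    (z : ℕ → Fin n → EuclideanSpace ℝ (Fin d)) (hdyn : IsDyn α z) (i : Fin n) (k : ℕ)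
    (hk : attn (z k) i = {i}) :
    z (k + 1) i = z k i ∧ attn (z (k + 1)) i = {i} := by
  set x := z k i with hx
  have heq : z (k + 1) i = x := by
    rw [hdyn k i, hk]; simp [hx]
  have himem : i ∈ attn (z k) i := by rw [hk]; exact Finset.mem_singleton_self i
  have hsup : (⨆ ℓ, ⟪x, z k ℓ⟫) = ⟪x, x⟫ :=
    ((Finset.mem_filter.1 himem).2).symm
  have hle : ∀ j, ⟪x, z k j⟫ ≤ ⟪x, x⟫ := by
    intro j
    rw [← hsup]
    exact le_ciSup (f := fun ℓ => ⟪x, z k ℓ⟫) (Set.Finite.bddAbove (Set.finite_range _)) j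
  have hlt : ∀ j, j ≠ i → ⟪x, z k j⟫ < ⟪x, x⟫ := by
    intro j hj
    refine lt_of_le_of_ne (hle j) fun hcontra => hj ?_
    have : j ∈ attn (z k) i :=
      Finset.mem_filter.2 ⟨Finset.mem_univ _, by rw [hcontra, hsup]⟩
    rwa [hk, Finset.mem_singleton] at this
  have hhull : ∀ y ∈ convexHull ℝ (Set.range (z k)), ⟪x, y⟫ ≤ ⟪x, x⟫ :=
    inner_le_of_mem_convexHull x (by rintro y ⟨j, rfl⟩; exact hle j)
  have hlt' : ∀ j, j ≠ i → ⟪x, z (k + 1) j⟫ < ⟪x, x⟫ := by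
    intro j hj
    obtain ⟨m, hm, hdec⟩ := step_decomp hα z hdyn k j
    rw [hdec, inner_add_right, real_inner_smul_right, real_inner_smul_right]
    have h1 := hlt j hj
    have h2 := hhull m hm
    have h1α : (0:ℝ) < 1 + α := by linarith
    have hc0 : 0 < α / (1 + α) := by positivity
    have hc1 : 0 < 1 - α / (1 + α) := by
      rw [sub_pos, div_lt_one h1α]; linarith
    nlinarith
  have : Nonempty (Fin n) := ⟨i⟩
  have hsupx : (⨆ ℓ, ⟪x, z (k + 1) ℓ⟫) = ⟪x, x⟫ := by
    apply le_antisymm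
    · apply ciSup_le
      intro ℓ
      by_cases hℓ : ℓ = i
      · subst hℓ; rw [heq]
      · exact (hlt' ℓ hℓ).le
    · have := le_ciSup (f := fun ℓ => ⟪x, z (k + 1) ℓ⟫)
        (Set.Finite.bddAbove (Set.finite_range _)) i
      simpa [heq] using this
  refine ⟨heq, ?_⟩
  ext j
  simp only [attn, Finset.mem_filter, Finset.mem_univ, true_and, Finset.mem_singleton, heq,
    hsupx]
  constructor
  · intro hj
    by_contra hji
    exact absurd hj (ne_of_lt (hlt' j hji))
  · rintro rfl
    rw [heq]

/-- Every leader converges in finite time to a vertex (extreme point) of `K`. -/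
theorem leader_converges_to_vertex {d n : ℕ} (hd : 0 < d) (hn : 0 < n) (α : ℝ) (hα : 0 < α)
    (z : ℕ → Fin n → EuclideanSpace ℝ (Fin d)) (hdyn : IsDyn α z)
    (hdist : ∀ i j : Fin n, i ≠ j → z 0 i ≠ z 0 j) (hnz : ∀ i, z 0 i ≠ 0)
    (i : Fin n) (hleader : ∃ k : ℕ, attn (z k) i = {i}) :
    ∃ k : ℕ, (∀ ℓ : ℕ, k ≤ ℓ → z ℓ i = z k i) ∧
      z k i ∈ Set.extremePoints ℝ (limitK z) := by
  obtain ⟨k₀, hk₀⟩ := hleader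
  set x := z k₀ i with hxdef
  -- persistence by induction
  have hper : ∀ m : ℕ, z (k₀ + m) i = x ∧ attn (z (k₀ + m)) i = {i} := by
    intro m
    induction m with
    | zero => exact ⟨rfl, hk₀⟩
    | succ m ih =>
      obtain ⟨hfix, hattn⟩ := ih
      obtain ⟨hfix', hattn'⟩ := persist hα z hdyn i (k₀ + m) hattn
      rw [show k₀ + (m + 1) = (k₀ + m) + 1 from rfl]
      exact ⟨by rw [hfix', hfix], hattn'⟩
  have hfixed : ∀ ℓ, k₀ ≤ ℓ → z ℓ i = x := by
    intro ℓ hℓ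
    obtain ⟨m, rfl⟩ := Nat.exists_eq_add_of_le hℓ
    exact (hper m).1
  -- hulls are antitone
  have hanti : ∀ a b : ℕ, a ≤ b →
      convexHull ℝ (Set.range (z b)) ⊆ convexHull ℝ (Set.range (z a)) := by
    have h1 : ∀ k, convexHull ℝ (Set.range (z (k + 1))) ⊆ convexHull ℝ (Set.range (z k)) := by
      intro k
      apply convexHull_min _ (convex_convexHull ℝ _)
      rintro y ⟨j, rfl⟩
      exact step_mem_hull hα z hdyn k j
    have hA : Antitone fun k => convexHull ℝ (Set.range (z k)) :=
      antitone_nat_of_succ_le fun k => h1 k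
    exact fun a b hab => hA hab
  -- x ∈ limitK
  have hxK : x ∈ limitK z := by
    rw [limitK, Set.mem_iInter]
    intro ℓ
    rcases le_or_gt k₀ ℓ with h | h
    · rw [← hfixed ℓ h]
      exact subset_convexHull ℝ _ (Set.mem_range_self i)
    · exact hanti ℓ k₀ h.le (subset_convexHull ℝ _ (Set.mem_range_self i))
  -- strict inequalities at time k₀
  have himem : i ∈ attn (z k₀) i := by rw [hk₀]; exact Finset.mem_singleton_self i
  have hsup : (⨆ ℓ, ⟪x, z k₀ ℓ⟫) = ⟪x, x⟫ := ((Finset.mem_filter.1 himem).2).symm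
  have hle : ∀ j, ⟪x, z k₀ j⟫ ≤ ⟪x, x⟫ := by
    intro j
    rw [← hsup]
    exact le_ciSup (f := fun ℓ => ⟪x, z k₀ ℓ⟫) (Set.Finite.bddAbove (Set.finite_range _)) j
  have hlt : ∀ j, j ≠ i → ⟪x, z k₀ j⟫ < ⟪x, x⟫ := by
    intro j hj
    refine lt_of_le_of_ne (hle j) fun hcontra => hj ?_
    have : j ∈ attn (z k₀) i :=
      Finset.mem_filter.2 ⟨Finset.mem_univ _, by rw [hcontra, hsup]⟩
    rwa [hk₀, Finset.mem_singleton] at this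
  have hKle : ∀ y ∈ limitK z, ⟪x, y⟫ ≤ ⟪x, x⟫ := by
    intro y hy
    have : y ∈ convexHull ℝ (Set.range (z k₀)) := Set.mem_iInter.1 hy k₀
    exact inner_le_of_mem_convexHull x (by rintro w ⟨j, rfl⟩; exact hle j) y this
  have hKlt : ∀ y ∈ limitK z, y ≠ x → ⟪x, y⟫ < ⟪x, x⟫ := by
    intro y hy hyx
    have hyh : y ∈ convexHull ℝ (Set.range (z k₀)) := Set.mem_iInter.1 hy k₀
    rw [mem_convexHull_iff_exists_fintype] at hyh
    obtain ⟨ι, _, w, p, hw0, hw1, hp, hpsum⟩ := hyh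
    have hptle : ∀ t, ⟪x, p t⟫ ≤ ⟪x, x⟫ := by
      intro t; obtain ⟨j, hj⟩ := hp t; rw [← hj]; exact hle j
    have hptlt : ∀ t, p t ≠ x → ⟪x, p t⟫ < ⟪x, x⟫ := by
      intro t ht
      obtain ⟨j, hj⟩ := hp t
      by_cases hji : j = i
      · exact absurd (by rw [← hj, hji]) ht
      · rw [← hj]; exact hlt j hji
    -- there is a positive weight on a point ≠ x
    have hex : ∃ t, 0 < w t ∧ p t ≠ x := by
      by_contra hcon
      push_neg at hcon
      apply hyx
      rw [← hpsum]
      have : ∀ t ∈ Finset.univ, w t • p t = w t • x := by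
        intro t _
        rcases eq_or_lt_of_le (hw0 t) with h | h
        · rw [← h]; simp
        · rw [hcon t h]
      rw [Finset.sum_congr rfl this, ← Finset.sum_smul, hw1, one_smul]
    obtain ⟨t₀, hwt₀, hpt₀⟩ := hex
    have h1 : ⟪x, y⟫ = ∑ t, w t * ⟪x, p t⟫ := by
      rw [← hpsum, inner_sum]
      exact Finset.sum_congr rfl fun t _ => real_inner_smul_right _ _ _
    rw [h1]
    have h2 : ∑ t, w t * ⟪x, p t⟫ < ∑ t, w t * ⟪x, x⟫ := by
      apply Finset.sum_lt_sum
      · intro t _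
        exact mul_le_mul_of_nonneg_left (hptle t) (hw0 t)
      · exact ⟨t₀, Finset.mem_univ _,
          mul_lt_mul_of_pos_left (hptlt t₀ hpt₀) hwt₀⟩
    calc ∑ t, w t * ⟪x, p t⟫ < ∑ t, w t * ⟪x, x⟫ := h2
      _ = ⟪x, x⟫ := by rw [← Finset.sum_mul, hw1, one_mul]
  refine ⟨k₀, fun ℓ hℓ => hfixed ℓ hℓ, ?_⟩
  rw [mem_extremePoints]
  refine ⟨hxK, fun x₁ h₁ x₂ h₂ hseg => ?_⟩
  obtain ⟨a, b, ha, hb, hab, hxe⟩ := hseg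
  have h0 : ⟪x, a • x₁ + b • x₂⟫ = ⟪x, x⟫ := by rw [hxe]
  rw [inner_add_right, real_inner_smul_right, real_inner_smul_right] at h0
  have hle1 := hKle x₁ h₁
  have hle2 := hKle x₂ h₂
  constructor
  · by_contra hne
    have hs := hKlt x₁ h₁ hne
    have key : a * ⟪x, x₁⟫ + b * ⟪x, x₂⟫ < ⟪x, x⟫ := by
      calc a * ⟪x, x₁⟫ + b * ⟪x, x₂⟫ < a * ⟪x, x⟫ + b * ⟪x, x⟫ :=
            add_lt_add_of_lt_of_le (mul_lt_mul_of_pos_left hs ha)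
              (mul_le_mul_of_nonneg_left hle2 hb.le)
        _ = ⟪x, x⟫ := by rw [← add_mul, hab, one_mul]
    exact absurd h0 (ne_of_lt key)
  · by_contra hne
    have hs := hKlt x₂ h₂ hne
    have key : a * ⟪x, x₁⟫ + b * ⟪x, x₂⟫ < ⟪x, x⟫ := by
      calc a * ⟪x, x₁⟫ + b * ⟪x, x₂⟫ < a * ⟪x, x⟫ + b * ⟪x, x⟫ :=
            add_lt_add_of_le_of_lt (mul_le_mul_of_nonneg_left hle1 ha.le)
              (mul_lt_mul_of_pos_left hs hb)
        _ = ⟪x, x⟫ := by rw [← add_mul, hab, one_mul]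
    exact absurd h0 (ne_of_lt key)
end
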